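/- Let G be a finite simple connected graph with at least three vertices and let v1, v2, v3 be three distinct vertices of G. Then the Tutte matrix T(G, v1, v2, v3) is weakly chained diagonally dominant: every row indexed by a pinned vertex is strictly diagonally dominant, every other row is weakly diagonally dominant, and for every vertex u there is a sequence of indices u = u_0, u_1, …, u_r with T u_m u_{m+1} ≠ 0 for all m < r and u_r ∈ {v1, v2, v3}. -/
import Mathlib


/-- The Tutte matrix of a graph `G` with pinned vertices `v1, v2, v3`:
the row of a pinned vertex has a `1` on the diagonal and `0` elsewhere;
the row of a non-pinned vertex `u` has `deg u` on the diagonal,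
`-1` at the neighbours of `u`, and `0` elsewhere. -/
def tutteMatrix {V : Type*} [Fintype V] [DecidableEq V] (G : SimpleGraph V)
    [DecidableRel G.Adj] (v1 v2 v3 : V) : Matrix V V ℚ :=
  fun u w =>
    if u = v1 ∨ u = v2 ∨ u = v3 then (if u = w then 1 else 0)
    else if u = w then (G.degree u : ℚ)
    else if G.Adj u w then -1 else 0

lemma tutteMatrix_chain {V : Type*} [Fintype V] [DecidableEq V] (G : SimpleGraph V)
    [DecidableRel G.Adj] (v1 v2 v3 : V) {u t : V} (ht : t = v1 ∨ t = v2 ∨ t = v3)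
    (p : G.Walk u t) :
    ∃ (r : ℕ) (c : ℕ → V), c 0 = u ∧
      (∀ m < r, tutteMatrix G v1 v2 v3 (c m) (c (m + 1)) ≠ 0) ∧
      (c r = v1 ∨ c r = v2 ∨ c r = v3) := by
  induction p with
  | @nil x => exact ⟨0, fun _ => x, rfl, by simp, ht⟩
  | @cons a b _ hab _ ih =>
    by_cases hp : a = v1 ∨ a = v2 ∨ a = v3
    · exact ⟨0, fun _ => a, rfl, by simp, hp⟩
    · obtain ⟨r, c, hc0, hchain, hend⟩ := ih ht
      refine ⟨r + 1, fun n => if n = 0 then a else c (n - 1), rfl, ?_, by simpa using hend⟩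
      intro m hm
      cases m with
      | zero =>
        have hne : a ≠ b := hab.ne
        simp [tutteMatrix, hp, hne, hab, hc0]
      | succ k =>
        simpa using hchain k (by omega)

theorem tutteMatrix_wcdd {V : Type*} [Fintype V] [DecidableEq V]
    (G : SimpleGraph V) [DecidableRel G.Adj] (hG : G.Connected)
    (hcard : 3 ≤ Fintype.card V)
    (v1 v2 v3 : V) (h12 : v1 ≠ v2) (h13 : v1 ≠ v3) (h23 : v2 ≠ v3) :
    (∀ u : V, (u = v1 ∨ u = v2 ∨ u = v3) →
      ∑ w ∈ Finset.univ.erase u, |tutteMatrix G v1 v2 v3 u w| <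
        |tutteMatrix G v1 v2 v3 u u|) ∧
    (∀ u : V,
      ∑ w ∈ Finset.univ.erase u, |tutteMatrix G v1 v2 v3 u w| ≤
        |tutteMatrix G v1 v2 v3 u u|) ∧
    (∀ u : V, ∃ (r : ℕ) (c : ℕ → V), c 0 = u ∧
      (∀ m < r, tutteMatrix G v1 v2 v3 (c m) (c (m + 1)) ≠ 0) ∧
      (c r = v1 ∨ c r = v2 ∨ c r = v3)) := by
  have hpinned : ∀ u : V, (u = v1 ∨ u = v2 ∨ u = v3) →
      ∑ w ∈ Finset.univ.erase u, |tutteMatrix G v1 v2 v3 u w| <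
        |tutteMatrix G v1 v2 v3 u u| := by
    intro u hu
    have h1 : ∑ w ∈ Finset.univ.erase u, |tutteMatrix G v1 v2 v3 u w| = 0 := by
      apply Finset.sum_eq_zero
      intro w hw
      have : u ≠ w := fun h => (Finset.mem_erase.mp hw).1 h.symm
      simp [tutteMatrix, hu, this]
    rw [h1]
    simp [tutteMatrix, hu]
  refine ⟨hpinned, ?_, ?_⟩
  · intro u
    by_cases hu : u = v1 ∨ u = v2 ∨ u = v3
    · exact (hpinned u hu).le
    · have h1 : ∑ w ∈ Finset.univ.erase u, |tutteMatrix G v1 v2 v3 u w|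
          = ∑ w ∈ Finset.univ.erase u, (if G.Adj u w then (1:ℚ) else 0) := by
        apply Finset.sum_congr rfl
        intro w hw
        have hne : u ≠ w := fun h => (Finset.mem_erase.mp hw).1 h.symm
        by_cases hadj : G.Adj u w <;> simp [tutteMatrix, hu, hne, hadj]
      have h2 : ∑ w ∈ Finset.univ.erase u, (if G.Adj u w then (1:ℚ) else 0)
          = ∑ w : V, (if G.Adj u w then (1:ℚ) else 0) := by
        rw [← Finset.add_sum_erase _ _ (Finset.mem_univ u)]
        simp [G.irrefl]
      have h3 : ∑ w : V, (if G.Adj u w then (1:ℚ) else 0) = (G.degree u : ℚ) := by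
        rw [Finset.sum_boole]
        rw [SimpleGraph.degree]
        congr 1
        rw [SimpleGraph.neighborFinset_eq_filter]
      rw [h1, h2, h3]
      simp [tutteMatrix, hu, abs_of_nonneg (by positivity : (0:ℚ) ≤ (G.degree u : ℚ))]
  · intro u
    exact tutteMatrix_chain G v1 v2 v3 (Or.inl rfl) ((hG.preconnected u v1).some)
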